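/- Let P be an object of K(Prj C(R)). Then P is a totally acyclic complex of projective objects of C(R) if and only if for every j ∈ ℤ, its j-th row P^j is a totally acyclic complex of projective R-modules. -/

import Mathlib

open CategoryTheory CategoryTheory.Limits

variable {V : Type*} [Category V] [Limits.HasZeroMorphisms V]

/-- The complex of abelian groups `Hom(X, Y)` is acyclic (exact at every spot). -/
def HomIntoExact (X : CochainComplex V ℤ) (Y : V) : Prop :=
  ∀ (n : ℤ) (f : X.X n ⟶ Y), X.d (n - 1) n ≫ f = 0 →
    ∃ g : X.X (n + 1) ⟶ Y, X.d n (n + 1) ≫ g = f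

/-- The complex of abelian groups `Hom(Y, X)` is acyclic (exact at every spot). -/
def HomFromExact (X : CochainComplex V ℤ) (Y : V) : Prop :=
  ∀ (n : ℤ) (f : Y ⟶ X.X n), f ≫ X.d n (n + 1) = 0 →
    ∃ g : Y ⟶ X.X (n - 1), g ≫ X.d (n - 1) n = f

/-- A complex `X` over an additive subcategory (given by the predicate `Q`) is totally
acyclic if `Hom(X, Y)` and `Hom(Y, X)` are acyclic complexes of abelian groups for every
`Y` with `Q Y`. -/
def IsTotallyAcyclic (Q : V → Prop) (X : CochainComplex V ℤ) : Prop :=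
  ∀ Y : V, Q Y → HomIntoExact X Y ∧ HomFromExact X Y


namespace TotAcyclicAux

variable {R : Type} [Ring R]

/-- The "double" complex with `Q` in degrees `a` and `b = a+1`, identity differential. -/
def dbl (a b : ℤ) (hab : a + 1 = b) (Q : ModuleCat R) : CochainComplex (ModuleCat R) ℤ where
  X i := if i = a ∨ i = b then Q else ModuleCat.of R PUnit
  d i j := if h : i = a ∧ j = b then
      eqToHom (by rw [if_pos (Or.inl h.1), if_pos (Or.inr h.2)]) else 0
  shape i j hij := by
    rw [dif_neg]
    rintro ⟨rfl, rfl⟩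
    exact hij hab
  d_comp_d' i j k _ _ := by
    by_cases h : i = a ∧ j = b
    · rw [dif_neg (show ¬(j = a ∧ k = b) by rintro ⟨rfl, rfl⟩; omega), comp_zero]
    · rw [dif_neg h, zero_comp]

lemma dbl_X (a b : ℤ) (hab : a + 1 = b) (Q : ModuleCat R) {i : ℤ} (h : i = a ∨ i = b) :
    (dbl a b hab Q).X i = Q := if_pos h

lemma dbl_X_isZero (a b : ℤ) (hab : a + 1 = b) (Q : ModuleCat R) {i : ℤ}
    (h : ¬(i = a ∨ i = b)) : IsZero ((dbl a b hab Q).X i) := by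
  rw [show (dbl a b hab Q).X i = ModuleCat.of R PUnit from if_neg h]
  exact ModuleCat.isZero_of_subsingleton _

lemma dbl_d (a b : ℤ) (hab : a + 1 = b) (Q : ModuleCat R) :
    (dbl a b hab Q).d a b =
      eqToHom (dbl_X a b hab Q (Or.inl rfl)) ≫ eqToHom (dbl_X a b hab Q (Or.inr rfl)).symm := by
  rw [show (dbl a b hab Q).d a b = _ from dif_pos ⟨rfl, rfl⟩, eqToHom_trans]
  rfl

lemma dbl_d_zero (a b : ℤ) (hab : a + 1 = b) (Q : ModuleCat R) {i j : ℤ}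
    (h : ¬(i = a ∧ j = b)) : (dbl a b hab Q).d i j = 0 := dif_neg h


variable {Q : ModuleCat R} {M : CochainComplex (ModuleCat R) ℤ}

/-- Chain map out of the double complex, from a module map `Q ⟶ M.X a`. -/
def descHom (a b : ℤ) (hab : a + 1 = b) (u : Q ⟶ M.X a) : dbl a b hab Q ⟶ M where
  f i := if h : i = a then
      eqToHom (dbl_X a b hab Q (Or.inl h)) ≫ u ≫ eqToHom (congrArg M.X h.symm)
    else if h' : i = b then
      eqToHom (dbl_X a b hab Q (Or.inr h')) ≫ u ≫ M.d a b ≫ eqToHom (congrArg M.X h'.symm)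
    else 0
  comm' i j hij := by
    have hj : i + 1 = j := hij
    by_cases hi : i = a
    · subst hi
      obtain rfl : j = b := by omega
      rw [dif_pos rfl, dif_neg (show ¬ j = i by omega), dif_pos rfl, dbl_d i j hab Q]
      simp
    · by_cases hib : i = b
      · subst hib
        rw [dif_neg hi, dif_pos rfl, dif_neg (show ¬ j = a by omega),
          dif_neg (show ¬ j = i by omega), dbl_d_zero a i hab Q (fun hh => hi hh.1)]
        simp
      · rw [dif_neg hi, dif_neg hib, dbl_d_zero a b hab Q (fun hh => hi hh.1)]
        simp

@[simp] lemma descHom_f_a (a b : ℤ) (hab : a + 1 = b) (u : Q ⟶ M.X a) :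
    (descHom a b hab u).f a = eqToHom (dbl_X a b hab Q (Or.inl rfl)) ≫ u := by
  simp [descHom]

@[simp] lemma descHom_f_b (a b : ℤ) (hab : a + 1 = b) (u : Q ⟶ M.X a) :
    (descHom a b hab u).f b =
      eqToHom (dbl_X a b hab Q (Or.inr rfl)) ≫ u ≫ M.d a b := by
  have : ¬ b = a := by omega
  simp [descHom, this]

/-- Chain map into the double complex, from a module map `M.X b ⟶ Q`. -/
def liftHom (a b : ℤ) (hab : a + 1 = b) (v : M.X b ⟶ Q) : M ⟶ dbl a b hab Q where
  f i := if h : i = b then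
      eqToHom (congrArg M.X h) ≫ v ≫ eqToHom (dbl_X a b hab Q (Or.inr h)).symm
    else if h' : i = a then
      eqToHom (congrArg M.X h') ≫ M.d a b ≫ v ≫ eqToHom (dbl_X a b hab Q (Or.inl h')).symm
    else 0
  comm' i j hij := by
    have hjj : i + 1 = j := hij
    by_cases hi : i = a
    · subst hi
      obtain rfl : j = b := by omega
      rw [dif_neg (show ¬ i = j by omega), dif_pos rfl, dif_pos rfl, dbl_d i j hab Q]
      simp
    · by_cases hib : i = b
      · subst hib
        rw [dif_pos rfl, dbl_d_zero a i hab Q (fun hh => hi hh.1),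
          dif_neg (show ¬ j = i by omega), dif_neg (show ¬ j = a by omega)]
        simp
      · rw [dif_neg hib, dif_neg hi, dbl_d_zero a b hab Q (fun hh => hi hh.1)]
        by_cases hj : j = b
        · exact absurd (show i = a by omega) hi
        · by_cases hja : j = a
          · rw [dif_neg hj, dif_pos hja]
            subst hja
            simp
          · rw [dif_neg hj, dif_neg hja]
            simp

@[simp] lemma liftHom_f_b (a b : ℤ) (hab : a + 1 = b) (v : M.X b ⟶ Q) :
    (liftHom a b hab v).f b = v ≫ eqToHom (dbl_X a b hab Q (Or.inr rfl)).symm := by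
  simp [liftHom]

@[simp] lemma liftHom_f_a (a b : ℤ) (hab : a + 1 = b) (v : M.X b ⟶ Q) :
    (liftHom a b hab v).f a =
      M.d a b ≫ v ≫ eqToHom (dbl_X a b hab Q (Or.inl rfl)).symm := by
  have : ¬ a = b := by omega
  simp [liftHom, this]


lemma epi_of_eval {A B : CochainComplex (ModuleCat R) ℤ} (e : A ⟶ B)
    (he : ∀ i : ℤ, Epi (e.f i)) : Epi e := by
  constructor
  intro Z u v h
  apply HomologicalComplex.hom_ext
  intro i
  have hi := congrArg (fun φ => HomologicalComplex.Hom.f φ i) h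
  simp only [HomologicalComplex.comp_f] at hi
  exact (@cancel_epi _ _ _ _ _ _ (he i) _ _).1 hi

lemma eval_epi {A B : CochainComplex (ModuleCat R) ℤ} (e : A ⟶ B) [Epi e] (i : ℤ) :
    Epi (e.f i) := by
  constructor
  intro Z u v huv
  have hab : (i - 1) + 1 = i := by omega
  have h1 : e ≫ liftHom (i - 1) i hab u = e ≫ liftHom (i - 1) i hab v := by
    apply HomologicalComplex.hom_ext
    intro k
    simp only [HomologicalComplex.comp_f]
    by_cases hk : k = i
    · subst hk
      simp only [liftHom_f_b, ← Category.assoc, huv]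
    · by_cases hk' : k = k - 1
      · omega
      · by_cases hk2 : k = i - 1
        · subst hk2
          simp only [liftHom_f_a, ← Category.assoc]
          rw [Category.assoc, Category.assoc, ← Category.assoc (e.f (i-1)),
            HomologicalComplex.Hom.comm, Category.assoc, ← Category.assoc (e.f i), huv]
          simp
        · simp [liftHom, hk, hk2]
  have h2 := congrArg (fun φ => HomologicalComplex.Hom.f φ i) ((cancel_epi e).1 h1)
  simp only [liftHom_f_b] at h2
  exact (cancel_mono (eqToHom (dbl_X (i - 1) i hab Z (Or.inr rfl)).symm)).1 h2

lemma dbl_projective (a b : ℤ) (hab : a + 1 = b) (Q : ModuleCat R) (hQ : Projective Q) :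
    Projective (dbl a b hab Q) := by
  constructor
  intro E M g e he
  haveI : Epi (e.f a) := eval_epi e a
  obtain ⟨u, hu⟩ := hQ.factors (eqToHom (dbl_X a b hab Q (Or.inl rfl)).symm ≫ g.f a) (e.f a)
  refine ⟨descHom a b hab u, ?_⟩
  apply HomologicalComplex.hom_ext
  intro i
  simp only [HomologicalComplex.comp_f]
  by_cases hi : i = a
  · subst hi
    rw [descHom_f_a, Category.assoc, hu]
    simp
  · by_cases hib : i = b
    · subst hib
      rw [descHom_f_b]
      have h0 := g.comm a i
      rw [dbl_d a i hab Q] at h0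
      have hgb : g.f i = eqToHom ((dbl_X a i hab Q (Or.inr rfl)).trans
          (dbl_X a i hab Q (Or.inl rfl)).symm) ≫ g.f a ≫ M.d a i := by
        rw [h0]
        simp
      rw [hgb, Category.assoc, Category.assoc, ← e.comm a i, ← Category.assoc u, hu]
      simp
    · exact (dbl_X_isZero a b hab Q (not_or.2 ⟨hi, hib⟩)).eq_of_src _ _

/-- Map of double complexes induced by a module map. -/
def dblMap (a b : ℤ) (hab : a + 1 = b) {Q Q' : ModuleCat R} (φ : Q ⟶ Q') :
    dbl a b hab Q ⟶ dbl a b hab Q' where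
  f i := if h : i = a ∨ i = b then
      eqToHom (dbl_X a b hab Q h) ≫ φ ≫ eqToHom (dbl_X a b hab Q' h).symm
    else 0
  comm' i j hij := by
    have hjj : i + 1 = j := hij
    by_cases hi : i = a
    · subst hi
      obtain rfl : j = b := by omega
      rw [dif_pos (Or.inl rfl), dif_pos (Or.inr rfl), dbl_d i j hab Q, dbl_d i j hab Q']
      simp
    · by_cases hib : i = b
      · subst hib
        rw [dbl_d_zero a i hab Q (fun hh => hi hh.1),
          dbl_d_zero a i hab Q' (fun hh => hi hh.1)]
        simp
      · rw [dif_neg (not_or.2 ⟨hi, hib⟩), dbl_d_zero a b hab Q' (fun hh => hi hh.1),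
          dbl_d_zero a b hab Q (fun hh => hi hh.1)]
        simp

lemma dblMap_epi (a b : ℤ) (hab : a + 1 = b) {Q Q' : ModuleCat R} (φ : Q ⟶ Q')
    [Epi φ] : Epi (dblMap a b hab φ) := by
  apply epi_of_eval
  intro i
  by_cases h : i = a ∨ i = b
  · rw [show (dblMap a b hab φ).f i = eqToHom (dbl_X a b hab Q h) ≫ φ ≫
      eqToHom (dbl_X a b hab Q' h).symm from dif_pos h]
    infer_instance
  · constructor
    intro Z u v _
    exact (dbl_X_isZero a b hab Q' h).eq_of_src _ _

lemma X_projective (Y : CochainComplex (ModuleCat R) ℤ) (hY : Projective Y) (j : ℤ) :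
    Projective (Y.X j) := by
  constructor
  intro E M u e he
  have hab : (j - 1) + 1 = j := by omega
  haveI : Epi (dblMap (j - 1) j hab e) := dblMap_epi (j - 1) j hab e
  obtain ⟨L, hL⟩ := hY.factors (liftHom (j - 1) j hab u) (dblMap (j - 1) j hab e)
  refine ⟨L.f j ≫ eqToHom (dbl_X (j - 1) j hab E (Or.inr rfl)), ?_⟩
  have h2 := congrArg (fun φ => HomologicalComplex.Hom.f φ j) hL
  simp only [HomologicalComplex.comp_f, liftHom_f_b] at h2
  rw [show (dblMap (j - 1) j hab e).f j = eqToHom (dbl_X (j - 1) j hab E (Or.inr rfl)) ≫ e ≫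
      eqToHom (dbl_X (j - 1) j hab M (Or.inr rfl)).symm from dif_pos (Or.inr rfl)] at h2
  rw [Category.assoc]
  exact (cancel_mono (eqToHom (dbl_X (j - 1) j hab M (Or.inr rfl)).symm)).1 (by
    simpa using h2)


/-- The contractible "cover" of a complex `Y`, with `(cover Y).X i = Y.X i ⊞ Y.X (i-1)`. -/
noncomputable abbrev cover (Y : CochainComplex (ModuleCat R) ℤ) : CochainComplex (ModuleCat R) ℤ where
  X i := Y.X i ⊞ Y.X (i - 1)
  d i j := if h : i + 1 = j then
      biprod.fst ≫ eqToHom (congrArg Y.X (show i = j - 1 by omega)) ≫ biprod.inr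
    else 0
  shape i j hij := dif_neg hij
  d_comp_d' i j k hij hjk := by
    rw [dif_pos (show i + 1 = j from hij), dif_pos (show j + 1 = k from hjk)]
    simp

/-- The canonical epimorphism `cover Y ⟶ Y`. -/
noncomputable def coverπ (Y : CochainComplex (ModuleCat R) ℤ) : cover Y ⟶ Y where
  f i := biprod.desc (𝟙 (Y.X i)) (Y.d (i - 1) i)
  comm' i j hij := by
    have hj : i + 1 = j := hij
    rw [show (cover Y).d i j = biprod.fst ≫
      eqToHom (congrArg Y.X (show i = j - 1 by omega)) ≫ biprod.inr from dif_pos hj]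
    apply biprod.hom_ext'
    · obtain rfl : i = j - 1 := by omega
      simp
    · simp

lemma coverπ_epi (Y : CochainComplex (ModuleCat R) ℤ) : Epi (coverπ Y) := by
  apply epi_of_eval
  intro i
  constructor
  intro Z u v h
  have h2 := congrArg (fun w => biprod.inl ≫ w) h
  simpa [coverπ] using h2

lemma comp_desc {W X Y Z : ModuleCat R} (w : W ⟶ X ⊞ Y) (u : X ⟶ Z) (v : Y ⟶ Z) :
    w ≫ biprod.desc u v = w ≫ biprod.fst ≫ u + w ≫ biprod.snd ≫ v := by
  rw [biprod.desc_eq]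
  simp [Preadditive.comp_add]

/-- A projective complex admits a contracting homotopy. -/
lemma contraction (Y : CochainComplex (ModuleCat R) ℤ) (hY : Projective Y) :
    ∃ s : ∀ i j : ℤ, Y.X i ⟶ Y.X j,
      ∀ a b c : ℤ, a + 1 = b → b + 1 = c →
        s b a ≫ Y.d a b + Y.d b c ≫ s c b = 𝟙 (Y.X b) := by
  haveI := coverπ_epi Y
  obtain ⟨σ, hσ⟩ := hY.factors (𝟙 Y) (coverπ Y)
  refine ⟨fun i j => if h : i - 1 = j then
      σ.f i ≫ biprod.snd ≫ eqToHom (congrArg Y.X h) else 0, ?_⟩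
  intro a b c hab hbc
  dsimp only
  rw [dif_pos (show b - 1 = a by omega), dif_pos (show c - 1 = b by omega)]
  have h1 := congrArg (fun φ => HomologicalComplex.Hom.f φ b) hσ
  simp only [HomologicalComplex.comp_f, HomologicalComplex.id_f] at h1
  have h2 := σ.comm b c
  rw [show (cover Y).d b c = biprod.fst ≫
    eqToHom (congrArg Y.X (show b = c - 1 by omega)) ≫ biprod.inr from dif_pos hbc] at h2
  have h3 : σ.f b ≫ biprod.fst =
      Y.d b c ≫ σ.f c ≫ biprod.snd ≫ eqToHom (congrArg Y.X (show c - 1 = b by omega)) := by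
    have h5 := congrArg (fun w => w ≫ biprod.snd ≫
      eqToHom (congrArg Y.X (show c - 1 = b by omega))) h2
    simpa using h5
  have h4 : σ.f b ≫ biprod.fst + σ.f b ≫ biprod.snd ≫ Y.d (b - 1) b = 𝟙 (Y.X b) := by
    rw [← h1, show (coverπ Y).f b = biprod.desc (𝟙 (Y.X b)) (Y.d (b - 1) b) from rfl,
      comp_desc]
    simp
  obtain rfl : a = b - 1 := by omega
  rw [eqToHom_refl]
  calc (σ.f b ≫ biprod.snd ≫ 𝟙 (Y.X (b - 1))) ≫ Y.d (b - 1) b +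
        Y.d b c ≫ σ.f c ≫ biprod.snd ≫ eqToHom (congrArg Y.X (show c - 1 = b by omega))
      = σ.f b ≫ biprod.snd ≫ Y.d (b - 1) b + σ.f b ≫ biprod.fst := by
        rw [← h3]; simp
    _ = 𝟙 (Y.X b) := by rw [add_comm]; exact h4

end TotAcyclicAux


open TotAcyclicAux in
/-- Let `P` be an object of `K(Prj C(R))`, i.e. a complex of projective
complexes of `R`-modules.  Then `P` is a totally acyclic complex of projective objects of
`C(R)` if and only if for every `j ∈ ℤ` its `j`-th row `P^j` is a totally acyclic complex
of projective `R`-modules. -/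
theorem totallyAcyclic_iff_rows_totallyAcyclic
    (R : Type) [Ring R]
    (P : CochainComplex (CochainComplex (ModuleCat R) ℤ) ℤ)
    (hproj : ∀ i : ℤ, Projective (P.X i)) :
    IsTotallyAcyclic (fun Y : CochainComplex (ModuleCat R) ℤ => Projective Y) P ↔
      ∀ j : ℤ, IsTotallyAcyclic (fun M : ModuleCat R => Projective M)
        (((HomologicalComplex.eval (ModuleCat R) (ComplexShape.up ℤ) j).mapHomologicalComplex
          (ComplexShape.up ℤ)).obj P) := by
  open TotAcyclicAux in
  constructor
  · intro hP j Q hQ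
    constructor
    · -- HomIntoExact of the row
      intro n f hf
      change (P.X n).X j ⟶ Q at f
      have hab : (j - 1) + 1 = j := by omega
      have hD := dbl_projective (j - 1) j hab Q hQ
      have hf' : ∀ k : ℤ, (P.d (n - 1) n).f k ≫ (liftHom (j - 1) j hab (M := P.X n) f).f k = 0 := by
        intro k
        by_cases hk : k = j
        · subst hk
          rw [liftHom_f_b, ← Category.assoc,
            show (P.d (n - 1) n).f k ≫ f = 0 from hf, zero_comp]
        · by_cases hk' : k = j - 1
          · subst hk'
            rw [liftHom_f_a, ← Category.assoc, (P.d (n - 1) n).comm (j - 1) j,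
              Category.assoc, ← Category.assoc ((P.d (n - 1) n).f j),
              show (P.d (n - 1) n).f j ≫ f = 0 from hf, zero_comp, comp_zero]
          · rw [show (liftHom (j - 1) j hab (M := P.X n) f).f k = 0 by
              simp [liftHom, hk, hk'], comp_zero]
      have hF : P.d (n - 1) n ≫ liftHom (j - 1) j hab (M := P.X n) f = 0 := by
        apply HomologicalComplex.hom_ext
        intro k
        simpa using hf' k
      obtain ⟨G, hG⟩ := (hP (dbl (j - 1) j hab Q) hD).1 n (liftHom (j - 1) j hab f) hF
      refine ⟨G.f j ≫ eqToHom (dbl_X (j - 1) j hab Q (Or.inr rfl)), ?_⟩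
      have h2 := congrArg (fun φ => HomologicalComplex.Hom.f φ j) hG
      simp only [HomologicalComplex.comp_f, liftHom_f_b] at h2
      show (P.d n (n + 1)).f j ≫ G.f j ≫ eqToHom (dbl_X (j - 1) j hab Q (Or.inr rfl)) = f
      rw [← Category.assoc, h2, Category.assoc, eqToHom_trans, eqToHom_refl, Category.comp_id]
    · -- HomFromExact of the row
      intro n f hf
      change Q ⟶ (P.X n).X j at f
      have hD := dbl_projective j (j + 1) rfl Q hQ
      have hf' : ∀ k : ℤ, (descHom j (j + 1) rfl (M := P.X n) f).f k ≫ (P.d n (n + 1)).f k = 0 := by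
        intro k
        by_cases hk : k = j
        · subst hk
          rw [descHom_f_a, Category.assoc, show f ≫ (P.d n (n + 1)).f k = 0 from hf, comp_zero]
        · by_cases hk' : k = j + 1
          · subst hk'
            rw [descHom_f_b]
            simp only [Category.assoc]
            rw [← (P.d n (n + 1)).comm j (j + 1), ← Category.assoc f,
              show f ≫ (P.d n (n + 1)).f j = 0 from hf, zero_comp, comp_zero]
          · rw [show (descHom j (j + 1) rfl (M := P.X n) f).f k = 0 by
              simp [descHom, hk, hk'], zero_comp]
      have hF : descHom j (j + 1) rfl (M := P.X n) f ≫ P.d n (n + 1) = 0 := by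
        apply HomologicalComplex.hom_ext
        intro k
        simpa using hf' k
      obtain ⟨G, hG⟩ := (hP (dbl j (j + 1) rfl Q) hD).2 n (descHom j (j + 1) rfl f) hF
      refine ⟨eqToHom (dbl_X j (j + 1) rfl Q (Or.inl rfl)).symm ≫ G.f j, ?_⟩
      have h2 := congrArg (fun φ => HomologicalComplex.Hom.f φ j) hG
      simp only [HomologicalComplex.comp_f, descHom_f_a] at h2
      show (eqToHom (dbl_X j (j + 1) rfl Q (Or.inl rfl)).symm ≫ G.f j) ≫ (P.d (n - 1) n).f j = f
      rw [Category.assoc, h2, ← Category.assoc, eqToHom_trans, eqToHom_refl, Category.id_comp]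
  · intro h Y hY
    obtain ⟨s, hs⟩ := contraction Y hY
    have hYX : ∀ k : ℤ, Projective (Y.X k) := X_projective Y hY
    constructor
    · -- HomIntoExact P Y
      intro n f hf
      have hrow : ∀ k : ℤ, ∃ g : (P.X (n + 1)).X k ⟶ Y.X k,
          (P.d n (n + 1)).f k ≫ g = f.f k := by
        intro k
        refine (h k (Y.X k) (hYX k)).1 n (f.f k) ?_
        show (P.d (n - 1) n).f k ≫ f.f k = 0
        have := congrArg (fun φ => HomologicalComplex.Hom.f φ k) hf
        simpa using this
      choose g hg using hrow
      have hδ : ∀ a b : ℤ,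
          (P.d n (n + 1)).f a ≫ ((P.X (n + 1)).d a b ≫ g b - g a ≫ Y.d a b) = 0 := by
        intro a b
        rw [Preadditive.comp_sub]
        simp only [← Category.assoc]
        rw [(P.d n (n + 1)).comm a b, hg a, Category.assoc, hg b, f.comm a b, sub_self]
      refine ⟨HomologicalComplex.Hom.mk (fun k => g k +
          ((P.X (n + 1)).d k (k + 1) ≫ g (k + 1) - g k ≫ Y.d k (k + 1)) ≫ s (k + 1) k) ?_, ?_⟩
      · intro i jj hij
        obtain rfl : jj = i + 1 := (show i + 1 = jj from hij).symm
        have hc2 : s (i + 1) i ≫ Y.d i (i + 1) =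
            𝟙 (Y.X (i + 1)) - Y.d (i + 1) (i + 1 + 1) ≫ s (i + 1 + 1) (i + 1) :=
          eq_sub_of_add_eq (hs i (i + 1) (i + 1 + 1) rfl rfl)
        simp only [Preadditive.sub_comp, Preadditive.add_comp, Preadditive.comp_add,
          Preadditive.comp_sub, Category.assoc]
        rw [hc2]
        simp only [Preadditive.comp_sub, Category.comp_id, Preadditive.sub_comp,
          Category.assoc, HomologicalComplex.d_comp_d_assoc, HomologicalComplex.d_comp_d,
          zero_comp, comp_zero]
        abel
      · apply HomologicalComplex.hom_ext
        intro k
        simp only [HomologicalComplex.comp_f]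
        rw [Preadditive.comp_add, hg k, ← Category.assoc, hδ k (k + 1), zero_comp, add_zero]
    · -- HomFromExact P Y
      intro n f hf
      have hrow : ∀ k : ℤ, ∃ g : Y.X k ⟶ (P.X (n - 1)).X k,
          g ≫ (P.d (n - 1) n).f k = f.f k := by
        intro k
        refine (h k (Y.X k) (hYX k)).2 n (f.f k) ?_
        show f.f k ≫ (P.d n (n + 1)).f k = 0
        have := congrArg (fun φ => HomologicalComplex.Hom.f φ k) hf
        simpa using this
      choose g hg using hrow
      have hδ : ∀ a b : ℤ,
          (g a ≫ (P.X (n - 1)).d a b - Y.d a b ≫ g b) ≫ (P.d (n - 1) n).f b = 0 := by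
        intro a b
        rw [Preadditive.sub_comp, Category.assoc, ← (P.d (n - 1) n).comm a b,
          ← Category.assoc (g a), hg a, Category.assoc, hg b, f.comm a b, sub_self]
      refine ⟨HomologicalComplex.Hom.mk (fun k => g k +
          s k (k - 1) ≫ (g (k - 1) ≫ (P.X (n - 1)).d (k - 1) k - Y.d (k - 1) k ≫ g k)) ?_, ?_⟩
      · intro i jj hij
        obtain rfl : jj = i + 1 := (show i + 1 = jj from hij).symm
        rw [show i + 1 - 1 = i from by omega]
        have hc2 : Y.d i (i + 1) ≫ s (i + 1) i =
            𝟙 (Y.X i) - s i (i - 1) ≫ Y.d (i - 1) i :=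
          eq_sub_of_add_eq' (hs (i - 1) i (i + 1) (by omega) rfl)
        simp only [Preadditive.sub_comp, Preadditive.add_comp, Preadditive.comp_add,
          Preadditive.comp_sub, ← Category.assoc]
        rw [hc2]
        simp only [Preadditive.comp_sub, Preadditive.sub_comp, Category.id_comp,
          Category.comp_id, Category.assoc, HomologicalComplex.d_comp_d_assoc,
          HomologicalComplex.d_comp_d, zero_comp, comp_zero]
        abel
      · apply HomologicalComplex.hom_ext
        intro k
        simp only [HomologicalComplex.comp_f]
        rw [Preadditive.add_comp, hg k, Category.assoc, hδ (k - 1) k, comp_zero, add_zero]
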